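/- For every linear map Φ : Matrix (Fin n) (Fin n) ℂ →ₗ[ℂ] Matrix (Fin n) (Fin n) ℂ there exists a unique matrix W : Matrix (Fin n × Fin n) (Fin n × Fin n) ℂ such that for all vectors x y : Fin n → ℂ, star y ⬝ᵥ (Φ (Matrix.vecMulVec x (star x))).mulVec y = star (x ⊗ y) ⬝ᵥ W.mulVec (x ⊗ y). Conversely (by uniqueness) every W : Matrix (Fin n × Fin n) (Fin n × Fin n) ℂ arises in this way from at most one linear map Φ. -/

import Mathlib

open Matrix

/-- The pure tensor of two vectors: `(x ⊗ y) (i, j) = x i * y j`. -/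
def tensVec {n : ℕ} (x y : Fin n → ℂ) : Fin n × Fin n → ℂ := fun p => x p.1 * y p.2

/-- A matrix whose quadratic form vanishes identically over `ℂ` is zero. -/
lemma quad_zero {m : Type*} [Fintype m] [DecidableEq m] (M : Matrix m m ℂ)
    (h : ∀ x : m → ℂ, star x ⬝ᵥ M.mulVec x = 0) : M = 0 := by
  have hB : ∀ u v : m → ℂ, star u ⬝ᵥ M.mulVec v + star v ⬝ᵥ M.mulVec u = 0 := by
    intro u v
    have := h (u + v)
    simp only [star_add, add_dotProduct, Matrix.mulVec_add, dotProduct_add, h u, h v] at this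
    linear_combination this
  have hB2 : ∀ u v : m → ℂ, star u ⬝ᵥ M.mulVec v = 0 := by
    intro u v
    have h1 := hB u v
    have h2 := hB u ((Complex.I : ℂ) • v)
    simp only [star_smul, Matrix.mulVec_smul, dotProduct_smul, smul_dotProduct,
      smul_eq_mul, Complex.star_def, Complex.conj_I] at h2
    have h3 : Complex.I * (star u ⬝ᵥ M.mulVec v - star v ⬝ᵥ M.mulVec u) = 0 := by
      linear_combination h2
    rw [mul_eq_zero] at h3
    rcases h3 with h3 | h3
    · exact absurd h3 Complex.I_ne_zero
    · have : star u ⬝ᵥ M.mulVec v = star v ⬝ᵥ M.mulVec u := by linear_combination h3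
      linear_combination (h1 + this)/2
  ext i j
  have := hB2 (Pi.single (M := fun _ => ℂ) i 1) (Pi.single (M := fun _ => ℂ) j 1)
  have hs : star (Pi.single i 1 : m → ℂ) = Pi.single i 1 := by
    ext k; by_cases hk : k = i <;> simp [Pi.single_apply, hk]
  rw [hs] at this
  simpa using this

/-- Two matrices with the same quadratic form over `ℂ` are equal. -/
lemma quad_eq {m : Type*} [Fintype m] [DecidableEq m] (M N : Matrix m m ℂ)
    (h : ∀ x : m → ℂ, star x ⬝ᵥ M.mulVec x = star x ⬝ᵥ N.mulVec x) : M = N := by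
  have := quad_zero (M - N) (fun x => by
    rw [Matrix.sub_mulVec, dotProduct_sub, h x, sub_self])
  exact sub_eq_zero.mp this

lemma quadForm_sum {m ι : Type*} [Fintype m] [DecidableEq ι] (y : m → ℂ) (s : Finset ι)
    (A : ι → Matrix m m ℂ) :
    star y ⬝ᵥ (∑ i ∈ s, A i).mulVec y = ∑ i ∈ s, star y ⬝ᵥ (A i).mulVec y := by
  induction s using Finset.induction with
  | empty => simp
  | insert _ _ h ih => simp [Finset.sum_insert h, Matrix.add_mulVec, dotProduct_add, ih]

lemma quadForm_smul {m : Type*} [Fintype m] (y : m → ℂ) (c : ℂ) (A : Matrix m m ℂ) :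
    star y ⬝ᵥ (c • A).mulVec y = c * (star y ⬝ᵥ A.mulVec y) := by
  rw [Matrix.smul_mulVec, dotProduct_smul, smul_eq_mul]

/-- Quadratic form of `W` on a pure tensor, rewritten as an iterated quadratic form. -/
lemma tens_quad {n : ℕ} (W : Matrix (Fin n × Fin n) (Fin n × Fin n) ℂ) (x y : Fin n → ℂ) :
    star (tensVec x y) ⬝ᵥ W.mulVec (tensVec x y)
      = star x ⬝ᵥ (Matrix.of fun i k =>
          star y ⬝ᵥ (Matrix.of fun j l => W (i,j) (k,l)).mulVec y).mulVec x := by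
  simp only [dotProduct, Matrix.mulVec, tensVec, Matrix.of_apply, Pi.star_apply,
    star_mul', Fintype.sum_prod_type, Finset.mul_sum, Finset.sum_mul]
  refine Finset.sum_congr rfl fun i _ => ?_
  rw [Finset.sum_comm]
  refine Finset.sum_congr rfl fun k _ => ?_
  refine Finset.sum_congr rfl fun j _ => ?_
  refine Finset.sum_congr rfl fun l _ => ?_
  ring

lemma phi_decomp {n : ℕ} (Φ : Matrix (Fin n) (Fin n) ℂ →ₗ[ℂ] Matrix (Fin n) (Fin n) ℂ)
    (x y : Fin n → ℂ) :
    star y ⬝ᵥ (Φ (Matrix.vecMulVec x (star x))).mulVec y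
      = star x ⬝ᵥ (Matrix.of fun i k =>
          star y ⬝ᵥ (Φ (Matrix.single k i 1)).mulVec y).mulVec x := by
  have hM : Matrix.vecMulVec x (star x)
      = ∑ k, ∑ i, (x k * star (x i)) • Matrix.single k i (1:ℂ) := by
    ext a b
    simp [Matrix.sum_apply, Matrix.vecMulVec_apply, Matrix.single, Pi.star_apply,
      ite_and, Finset.sum_ite_eq, mul_ite]
  rw [hM]
  simp only [map_sum, _root_.map_smul, quadForm_sum, quadForm_smul]
  simp only [dotProduct, Matrix.mulVec, Matrix.of_apply, Pi.star_apply,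
    Finset.mul_sum, Finset.sum_mul]
  rw [Finset.sum_comm]
  refine Finset.sum_congr rfl fun i _ => Finset.sum_congr rfl fun k _ => ?_
  exact Finset.sum_congr rfl fun j _ => Finset.sum_congr rfl fun l _ => by ring

/-- A matrix on the tensor square is determined by its quadratic form on pure tensors. -/
lemma tens_unique {n : ℕ} (W₁ W₂ : Matrix (Fin n × Fin n) (Fin n × Fin n) ℂ)
    (h : ∀ x y : Fin n → ℂ,
      star (tensVec x y) ⬝ᵥ W₁.mulVec (tensVec x y)
        = star (tensVec x y) ⬝ᵥ W₂.mulVec (tensVec x y)) : W₁ = W₂ := by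
  have h1 : ∀ y : Fin n → ℂ,
      (Matrix.of fun i k => star y ⬝ᵥ (Matrix.of fun j l => W₁ (i,j) (k,l)).mulVec y)
        = (Matrix.of fun i k => star y ⬝ᵥ (Matrix.of fun j l => W₂ (i,j) (k,l)).mulVec y) := by
    intro y
    refine quad_eq _ _ fun x => ?_
    rw [← tens_quad, ← tens_quad, h x y]
  have h2 : ∀ i k : Fin n,
      (Matrix.of fun j l => W₁ (i,j) (k,l)) = (Matrix.of fun j l => W₂ (i,j) (k,l)) := by
    intro i k
    refine quad_eq _ _ fun y => ?_
    exact congrFun (congrFun (h1 y) i) k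
  ext ⟨i, j⟩ ⟨k, l⟩
  exact congrFun (congrFun (h2 i k) j) l

theorem operator_representation_of_linear_maps (n : ℕ) :
    (∀ Φ : Matrix (Fin n) (Fin n) ℂ →ₗ[ℂ] Matrix (Fin n) (Fin n) ℂ,
      ∃! W : Matrix (Fin n × Fin n) (Fin n × Fin n) ℂ,
        ∀ x y : Fin n → ℂ,
          star y ⬝ᵥ (Φ (Matrix.vecMulVec x (star x))).mulVec y
            = star (tensVec x y) ⬝ᵥ W.mulVec (tensVec x y)) ∧
    (∀ W : Matrix (Fin n × Fin n) (Fin n × Fin n) ℂ,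
      ∀ Φ₁ Φ₂ : Matrix (Fin n) (Fin n) ℂ →ₗ[ℂ] Matrix (Fin n) (Fin n) ℂ,
        (∀ x y : Fin n → ℂ,
          star y ⬝ᵥ (Φ₁ (Matrix.vecMulVec x (star x))).mulVec y
            = star (tensVec x y) ⬝ᵥ W.mulVec (tensVec x y)) →
        (∀ x y : Fin n → ℂ,
          star y ⬝ᵥ (Φ₂ (Matrix.vecMulVec x (star x))).mulVec y
            = star (tensVec x y) ⬝ᵥ W.mulVec (tensVec x y)) →
        Φ₁ = Φ₂) := by
  constructor
  · intro Φ
    refine ⟨Matrix.of fun p q => (Φ (Matrix.single q.1 p.1 1)) p.2 q.2, fun x y => ?_,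
      fun W' hW' => ?_⟩
    · rw [phi_decomp, tens_quad]; rfl
    · refine tens_unique W' _ fun x y => ?_
      rw [← hW' x y, phi_decomp, tens_quad]; rfl
  · intro W Φ₁ Φ₂ h₁ h₂
    -- the two maps agree on all rank-one projections
    have hq : ∀ x : Fin n → ℂ,
        Φ₁ (Matrix.vecMulVec x (star x)) = Φ₂ (Matrix.vecMulVec x (star x)) := by
      intro x
      refine quad_eq _ _ fun y => ?_
      rw [h₁ x y, h₂ x y]
    -- polarization: they agree on all `vecMulVec u (star v)`
    have hpol : ∀ u v : Fin n → ℂ,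
        Φ₁ (Matrix.vecMulVec u (star v)) = Φ₂ (Matrix.vecMulVec u (star v)) := by
      intro u v
      have key : (2:ℂ) • Matrix.vecMulVec u (star v)
          = Matrix.vecMulVec (u + v) (star (u + v))
            + Complex.I • Matrix.vecMulVec (u + Complex.I • v) (star (u + Complex.I • v))
            - (1 + Complex.I) • Matrix.vecMulVec u (star u)
            - (1 + Complex.I) • Matrix.vecMulVec v (star v) := by
        ext a b
        simp only [Matrix.smul_apply, Matrix.sub_apply, Matrix.add_apply,
          Matrix.vecMulVec_apply, Pi.star_apply, Pi.add_apply, Pi.smul_apply, smul_eq_mul,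
          star_add, star_mul', Complex.star_def, Complex.conj_I]
        linear_combination (u a * (starRingEnd ℂ) (v b) + (starRingEnd ℂ) (v b) * v a * Complex.I
          - v a * (starRingEnd ℂ) (u b)) * Complex.I_sq
      have h2 : Φ₁ ((2:ℂ) • Matrix.vecMulVec u (star v))
          = Φ₂ ((2:ℂ) • Matrix.vecMulVec u (star v)) := by
        rw [key]
        simp only [map_add, map_sub, _root_.map_smul, hq]
      rw [_root_.map_smul, _root_.map_smul] at h2
      exact smul_right_injective _ two_ne_zero h2
    -- conclude on the standard basis
    refine Module.Basis.ext (Matrix.stdBasis ℂ (Fin n) (Fin n)) fun p => ?_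
    rw [Matrix.stdBasis_eq_single]
    have hs : star (Pi.single p.2 1 : Fin n → ℂ) = Pi.single p.2 1 := by
      ext k; by_cases hk : k = p.2 <;> simp [Pi.single_apply, hk]
    rw [Matrix.single_eq_single_vecMulVec_single, ← hs]
    exact hpol _ _
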